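/- Let b ∈ ℝⁿ and let V be the minimal affine subspace of ℝⁿ containing b that is spanned by rational points. If dim V ≥ 1, then there exist rational points b₁, ..., b_{v+1} ∈ ℚⁿ ∩ V (where v = dim V) and positive reals a₁, ..., a_{v+1} with Σaⱼ = 1 and Σaⱼbⱼ = b, such that the convex hull of {b₁, ..., b_{v+1}} contains an open neighborhood of b in V. -/

import Mathlib

set_option maxHeartbeats 1000000

/-- A rational point of ℝⁿ. -/
def IsRationalPoint {n : ℕ} (x : Fin n → ℝ) : Prop := ∀ i, ∃ q : ℚ, x i = (q : ℝ)

/-- An affine subspace is rational if it is the affine span of its rational points. -/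
def IsRationalAffineSubspace {n : ℕ} (V : AffineSubspace ℝ (Fin n → ℝ)) : Prop :=
  V = affineSpan ℝ {x : Fin n → ℝ | x ∈ V ∧ IsRationalPoint x}

private lemma stmt_15_key (v tb T : ℝ) (hδpos : 0 < 1 / (2 * (v + 1)))
    (h2 : T ≤ v * (1 / (2 * (v + 1))))
    (hδv : v * (1 / (2 * (v + 1))) = 1 / 2 - 1 / (2 * (v + 1)))
    (hprod : -(1/2) < tb * (v + 1)) :
    T + v < (tb + 1) * (v + 1) := by
  have e2 : (tb + 1) * (v + 1) = tb * (v + 1) + (v + 1) := by ring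
  rw [e2]
  linarith

/-- Rational simplex statement: if the minimal rational affine subspace V containing b
has dimension v ≥ 1, there are v+1 rational points of V whose convex hull contains a
neighborhood of b in V, exhibiting b as a positive convex combination of them. -/
theorem stmt_15 (n : ℕ) (b : Fin n → ℝ)
    (V : AffineSubspace ℝ (Fin n → ℝ)) (hbV : b ∈ V)
    (hVrat : IsRationalAffineSubspace V)
    (hVmin : ∀ W : AffineSubspace ℝ (Fin n → ℝ),
      IsRationalAffineSubspace W → b ∈ W → V ≤ W)
    (v : ℕ) (hv : Module.finrank ℝ V.direction = v) (hv1 : 1 ≤ v) :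
    ∃ (p : Fin (v + 1) → (Fin n → ℝ)) (a : Fin (v + 1) → ℝ),
      (∀ j, p j ∈ V ∧ IsRationalPoint (p j)) ∧
      (∀ j, 0 < a j) ∧ (∑ j, a j = 1) ∧ (∑ j, a j • p j = b) ∧
      convexHull ℝ (Set.range p) ∈ nhdsWithin b (V : Set (Fin n → ℝ)) := by
  classical
  set S : Set (Fin n → ℝ) := {x : Fin n → ℝ | x ∈ V ∧ IsRationalPoint x} with hSdef
  have hV : V = affineSpan ℝ S := hVrat
  have hSne : S.Nonempty := by
    rcases Set.eq_empty_or_nonempty S with h | h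
    · exfalso
      rw [hV, h, AffineSubspace.span_empty] at hbV
      exact AffineSubspace.notMem_bot ℝ _ b hbV
    · exact h
  obtain ⟨q0, hq0V, hq0rat⟩ := hSne
  have hdir : V.direction = Submodule.span ℝ ((· -ᵥ q0) '' S) := by
    conv_lhs => rw [hV]
    rw [direction_affineSpan]
    exact vectorSpan_eq_span_vsub_set_right ℝ (show q0 ∈ S from ⟨hq0V, hq0rat⟩)
  -- select a linearly independent spanning family from rational difference vectors
  obtain ⟨tset, htsub, htspan, htli⟩ := exists_linearIndependent ℝ ((· -ᵥ q0) '' S)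
  have htspanW : Submodule.span ℝ tset = V.direction := by rw [htspan, hdir]
  have htfin : tset.Finite := htli.setFinite
  haveI : Fintype tset := htfin.fintype
  have hcard : Fintype.card tset = v := by
    have h1 : Module.finrank ℝ (Submodule.span ℝ tset) = tset.toFinset.card :=
      finrank_span_set_eq_card htli
    rw [htspanW, hv, Set.toFinset_card] at h1
    exact h1.symm
  have e : tset ≃ Fin v := (Fintype.equivFin tset).trans (finCongr hcard)
  set u : Fin v → (Fin n → ℝ) := fun j => ((e.symm j : tset) : Fin n → ℝ) with hu
  have humem : ∀ j, u j ∈ tset := fun j => (e.symm j).2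
  have huW : ∀ j, u j ∈ V.direction := fun j => htspanW ▸ Submodule.subset_span (humem j)
  have huli : LinearIndependent ℝ u := htli.comp e.symm e.symm.injective
  -- rational coordinates of q0 and of the u j
  choose cq hcq using hq0rat
  have hqim : ∀ j, ∃ x ∈ S, x -ᵥ q0 = u j := fun j => htsub (humem j)
  choose xs hxsS hxseq using hqim
  choose d hd using fun j => (hxsS j).2
  have hui : ∀ j i, u j i = (d j i : ℝ) - (cq i : ℝ) := by
    intro j i
    rw [← hxseq j]
    simp [hd, hcq]
  -- the basis of the direction space and dual functionals
  haveI : Nonempty (Fin v) := ⟨⟨0, hv1⟩⟩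
  set ι : Fin v → V.direction := fun j => ⟨u j, huW j⟩ with hι
  have hιli : LinearIndependent ℝ ι := by
    apply LinearIndependent.of_comp V.direction.subtype
    exact huli
  set WB : Module.Basis (Fin v) ℝ V.direction :=
    basisOfLinearIndependentOfCardEqFinrank hιli (by simp [hv]) with hWB
  have hWBcoe : ∀ j, (WB j : Fin n → ℝ) = u j := by
    intro j
    rw [hWB, coe_basisOfLinearIndependentOfCardEqFinrank]
  choose g hg using fun j => LinearMap.exists_extend (WB.coord j)
  have hrepr : ∀ x ∈ V, x = q0 + ∑ j, g j (x - q0) • u j := by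
    intro x hx
    have hxW : x - q0 ∈ V.direction := AffineSubspace.vsub_mem_direction hx hq0V
    set w : V.direction := (⟨x - q0, hxW⟩ : V.direction) with hw
    have h1 : ∀ j, g j (x - q0) = WB.repr w j := by
      intro j
      have := LinearMap.congr_fun (hg j) w
      rw [show x - q0 = (w : Fin n → ℝ) from rfl]
      simpa [Module.Basis.coord_apply] using this
    have h2 : x - q0 = ∑ j, WB.repr w j • u j := by
      have := WB.sum_repr w
      have h3 := congrArg (Subtype.val : V.direction → (Fin n → ℝ)) this
      simp only [Submodule.coe_sum, Submodule.coe_smul, hWBcoe] at h3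
      exact h3.symm
    have : x - q0 = ∑ j, g j (x - q0) • u j := by
      conv_lhs => rw [h2]
      exact Finset.sum_congr rfl fun j _ => by rw [h1 j]
    linear_combination (norm := abel) this
  -- rational approximation of the barycentric-type coordinates of b
  have hδpos : (0:ℝ) < 1/(2*((v:ℝ)+1)) := by positivity
  choose r hrb using fun j : Fin v => exists_rat_near (K := ℝ) (g j (b - q0)) hδpos
  -- coefficient functions
  set tt : (Fin n → ℝ) → Fin v → ℝ := fun x j => g j (x - q0) - (r j : ℝ) with htt
  set T : (Fin n → ℝ) → ℝ := fun x => ∑ j, tt x j with hT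
  set Cq : Fin (v+1) → Fin v → ℚ :=
    Fin.cons (fun k => r k - 1) (fun j k => r k + if k = j then 1 else 0) with hCq
  set p : Fin (v+1) → (Fin n → ℝ) := fun m => q0 + ∑ k, (Cq m k : ℝ) • u k with hp
  set αf : Fin (v+1) → (Fin n → ℝ) → ℝ :=
    Fin.cons (fun x => (1 - T x)/((v:ℝ)+1))
      (fun j x => tt x j + 1 - (T x + (v:ℝ))/((v:ℝ)+1)) with hαf
  have hvne : ((v:ℝ)+1) ≠ 0 := by positivity
  -- the coefficients sum to 1 for every x
  have hsum1 : ∀ x, (∑ m, αf m x) = 1 := by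
    intro x
    have hTx : ∑ j : Fin v, tt x j = T x := rfl
    rw [hαf, Fin.sum_univ_succ]
    simp only [Fin.cons_zero, Fin.cons_succ]
    rw [Finset.sum_sub_distrib, Finset.sum_add_distrib, Finset.sum_const, Finset.sum_const,
      Finset.card_univ, Fintype.card_fin, hTx]
    simp only [nsmul_eq_mul, mul_one]
    field_simp
    ring
  -- affine combination computation
  have hΦaff : ∀ (w : Fin (v+1) → ℝ) (cc : Fin (v+1) → Fin v → ℝ), (∑ m, w m) = 1 →
      ∑ m, w m • (q0 + ∑ k, cc m k • u k) = q0 + ∑ k, (∑ m, w m * cc m k) • u k := by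
    intro w cc hw
    simp only [smul_add, Finset.sum_add_distrib, ← Finset.sum_smul, hw, one_smul,
      Finset.smul_sum, smul_smul]
    congr 1
    rw [Finset.sum_comm]
    exact Finset.sum_congr rfl fun k _ => (Finset.sum_smul).symm
  -- key: for x ∈ V, x is the αf-combination of the p's
  have hcomb : ∀ x ∈ V, ∑ m, αf m x • p m = x := by
    intro x hx
    rw [hp]
    rw [hΦaff _ _ (hsum1 x)]
    conv_rhs => rw [hrepr x hx]
    congr 1
    refine Finset.sum_congr rfl fun k _ => ?_
    congr 1
    -- scalar identity
    have hTx : ∑ j : Fin v, tt x j = T x := rfl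
    rw [hαf, hCq, Fin.sum_univ_succ]
    simp only [Fin.cons_zero, Fin.cons_succ]
    push_cast
    simp only [apply_ite (fun q : ℚ => (q : ℝ)), Rat.cast_one, Rat.cast_zero]
    have hexp : ∀ j : Fin v,
        (tt x j + 1 - (T x + (v:ℝ))/((v:ℝ)+1)) * ((r k : ℝ) + if k = j then 1 else 0)
        = (tt x j + 1 - (T x + (v:ℝ))/((v:ℝ)+1)) * (r k : ℝ)
          + (if k = j then tt x j + 1 - (T x + (v:ℝ))/((v:ℝ)+1) else 0) := by
      intro j
      by_cases h : k = j <;> simp [h] <;> ring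
    rw [Finset.sum_congr rfl fun j _ => hexp j, Finset.sum_add_distrib,
      Finset.sum_ite_eq Finset.univ k]
    simp only [Finset.mem_univ, if_true]
    have htk : tt x k = g k (x - q0) - (r k : ℝ) := rfl
    rw [← Finset.sum_mul, Finset.sum_sub_distrib, Finset.sum_add_distrib, Finset.sum_const,
      Finset.sum_const, Finset.card_univ, Fintype.card_fin, hTx]
    simp only [nsmul_eq_mul, mul_one]
    rw [htk]
    field_simp
    ring
  -- membership and rationality of the vertices
  have hpV : ∀ m, p m ∈ V := by
    intro m
    rw [hp]
    have hmem : (∑ k, (Cq m k : ℝ) • u k) +ᵥ q0 ∈ V :=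
      AffineSubspace.vadd_mem_of_mem_direction
        (Submodule.sum_mem _ fun k _ => Submodule.smul_mem _ _ (huW k)) hq0V
    simpa [add_comm] using hmem
  have hprat : ∀ m, IsRationalPoint (p m) := by
    intro m i
    refine ⟨cq i + ∑ k, Cq m k * (d k i - cq i), ?_⟩
    rw [hp]
    simp only [Pi.add_apply, Finset.sum_apply, Pi.smul_apply, smul_eq_mul]
    push_cast
    rw [hcq i]
    congr 1
    exact Finset.sum_congr rfl fun k _ => by rw [hui k i]
  -- positivity of the coefficients at b
  have htb : ∀ j, |tt b j| < 1/(2*((v:ℝ)+1)) := fun j => hrb j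
  have hTb : |T b| ≤ (v:ℝ) * (1/(2*((v:ℝ)+1))) := by
    calc |T b| ≤ ∑ j, |tt b j| := Finset.abs_sum_le_sum_abs _ _
    _ ≤ ∑ _j : Fin v, 1/(2*((v:ℝ)+1)) :=
        Finset.sum_le_sum fun j _ => (htb j).le
    _ = (v:ℝ) * (1/(2*((v:ℝ)+1))) := by
        rw [Finset.sum_const, Finset.card_univ, Fintype.card_fin, nsmul_eq_mul]
  have hv0 : (0:ℝ) ≤ v := Nat.cast_nonneg v
  have hvpos : (0:ℝ) < (v:ℝ) + 1 := by positivity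
  have hTb1 : T b < 1 := by
    have h1 : T b ≤ |T b| := le_abs_self _
    have h2 : (v:ℝ) * (1/(2*((v:ℝ)+1))) < 1 := by
      rw [mul_one_div, div_lt_one (by positivity)]
      linarith
    linarith
  have hαpos : ∀ m, 0 < αf m b := by
    intro m
    refine Fin.cases ?_ ?_ m
    · rw [hαf]
      simp only [Fin.cons_zero]
      exact div_pos (by linarith) hvpos
    · intro j
      rw [hαf]
      simp only [Fin.cons_succ]
      have h1 : -(1/(2*((v:ℝ)+1))) < tt b j := neg_lt_of_abs_lt (htb j)
      have h2 : T b ≤ (v:ℝ) * (1/(2*((v:ℝ)+1))) := le_trans (le_abs_self _) hTb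
      have key : (T b + (v:ℝ))/((v:ℝ)+1) < tt b j + 1 := by
        rw [div_lt_iff₀ hvpos]
        have e1 : (-(1/(2*((v:ℝ)+1)))) * ((v:ℝ)+1) = -(1/2 : ℝ) := by
          field_simp
        have hprod := mul_lt_mul_of_pos_right h1 hvpos
        rw [e1] at hprod
        have hδv : (v:ℝ) * (1/(2*((v:ℝ)+1))) = 1/2 - 1/(2*((v:ℝ)+1)) := by
          field_simp
          ring
        exact stmt_15_key (v:ℝ) (tt b j) (T b) hδpos h2 hδv hprod
      linarith
  -- the open set
  have hcont_t : ∀ j, Continuous fun x => tt x j := by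
    intro j
    rw [htt]
    exact ((g j).continuous_of_finiteDimensional.comp
      (continuous_id.sub continuous_const)).sub continuous_const
  have hcont_T : Continuous T := by
    rw [hT]
    exact continuous_finset_sum _ fun j _ => hcont_t j
  have hcont : ∀ m, Continuous (αf m) := by
    intro m
    refine Fin.cases ?_ ?_ m
    · rw [hαf]
      simp only [Fin.cons_zero]
      exact (continuous_const.sub hcont_T).div_const _
    · intro j
      rw [hαf]
      simp only [Fin.cons_succ]
      exact ((hcont_t j).add continuous_const).sub
        ((hcont_T.add continuous_const).div_const _)
  set U : Set (Fin n → ℝ) := {x | ∀ m, 0 < αf m x} with hU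
  have hUopen : IsOpen U := by
    rw [hU, Set.setOf_forall]
    exact isOpen_iInter_of_finite fun m => (isOpen_Ioi (a := (0:ℝ))).preimage (hcont m)
  have hbU : b ∈ U := hαpos
  have hUsub : U ∩ (V : Set (Fin n → ℝ)) ⊆ convexHull ℝ (Set.range p) := by
    rintro x ⟨hxU, hxV⟩
    rw [← hcomb x hxV]
    exact (convex_convexHull ℝ _).sum_mem (fun m _ => (hxU m).le) (hsum1 x)
      (fun m _ => subset_convexHull ℝ _ (Set.mem_range_self m))
  exact ⟨p, fun m => αf m b, fun m => ⟨hpV m, hprat m⟩, hαpos, hsum1 b, hcomb b hbV,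
    mem_nhdsWithin.2 ⟨U, hUopen, hbU, hUsub⟩⟩
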